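/- arXiv:2507.03575 — 3 statements merged into one kernel-verified Lean document; each statement's English description precedes it below -/
import Mathlib

section
/- (Parabolic scaling bound for the heat kernel) The heat kernel Φ(t,x) = (4πt)^{-d/2} exp(−|x|²/(4t)) 𝟙_{t>0} satisfies, for every l ∈ ℕ and k ∈ ℕ^d, a pointwise bound |∂_t^l ∂_x^k Φ(t,x)| ≤ C(d,l,k) · ‖(t,x)‖_𝔰^{−d−2l−|k|₁} for all (t,x) ≠ 0, where ‖(t,x)‖_𝔰 = (|t| + |x|²)^{1/2} is the parabolic metric. -/
open MeasureTheory

/-- Partial derivative in the time variable of a function on `ℝ × ℝ^d`. -/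
noncomputable def pderivT {d : ℕ} (K : ℝ × (Fin d → ℝ) → ℝ) : ℝ × (Fin d → ℝ) → ℝ :=
  fun p => deriv (fun t => K (t, p.2)) p.1

/-- Partial derivative in the `i`-th spatial variable of a function on `ℝ × ℝ^d`. -/
noncomputable def pderivX {d : ℕ} (i : Fin d) (K : ℝ × (Fin d → ℝ) → ℝ) :
    ℝ × (Fin d → ℝ) → ℝ :=
  fun p => deriv (fun s => K (p.1, Function.update p.2 i s)) (p.2 i)

/-- Mixed partial derivative `∂_t^l ∂_x^k` of a function on `ℝ × ℝ^d`. -/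
noncomputable def pmixed {d : ℕ} (l : ℕ) (k : Fin d → ℕ) (K : ℝ × (Fin d → ℝ) → ℝ) :
    ℝ × (Fin d → ℝ) → ℝ :=
  (pderivT)^[l] (List.foldr (fun i F => (pderivX i)^[k i] F) K (List.finRange d))

/-- The `d`-dimensional heat kernel `Φ(t,x) = (4πt)^{-d/2} exp(−|x|²/(4t)) 𝟙_{t>0}`. -/
noncomputable def heatK (d : ℕ) : ℝ × (Fin d → ℝ) → ℝ :=
  fun p => if 0 < p.1 then
    (4 * Real.pi * p.1) ^ (-(d : ℝ) / 2) * Real.exp (-(∑ i, (p.2 i) ^ 2) / (4 * p.1))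
  else 0

open Real Filter Topology
open scoped ContDiff

/-! ### Auxiliary: the one-dimensional smooth glue function -/

noncomputable def gl (a : ℝ) : ℝ → ℝ := fun u => if 0 < u then Real.exp (-1/u) * u ^ (-a) else 0

lemma gl_nonpos {a u : ℝ} (hu : u ≤ 0) : gl a u = 0 := by
  simp [gl, not_lt.2 hu]

lemma gl_pos {a u : ℝ} (hu : 0 < u) : gl a u = Real.exp (-1/u) * u ^ (-a) := by
  simp [gl, hu]

lemma gl_tendsto (b : ℝ) :
    Filter.Tendsto (fun u : ℝ => Real.exp (-1/u) * u ^ (-b)) (nhdsWithin 0 (Set.Ioi 0)) (nhds 0) := by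
  have h := (tendsto_rpow_mul_exp_neg_mul_atTop_nhds_zero b 1 one_pos).comp
    tendsto_inv_nhdsGT_zero
  refine h.congr' ?_
  filter_upwards [self_mem_nhdsWithin] with u (hu : 0 < u)
  simp only [Function.comp]
  rw [Real.inv_rpow hu.le, ← Real.rpow_neg hu.le]
  ring_nf

lemma gl_hasDerivAt (a u : ℝ) :
    HasDerivAt (gl a) (gl (a+2) u - a * gl (a+1) u) u := by
  rcases lt_trichotomy u 0 with hu | hu | hu
  · have h0 : HasDerivAt (fun _ : ℝ => (0:ℝ)) 0 u := hasDerivAt_const _ _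
    have he : (fun _ : ℝ => (0:ℝ)) =ᶠ[nhds u] gl a := by
      filter_upwards [Iio_mem_nhds hu] with v (hv : v < 0)
      rw [gl_nonpos hv.le]
    have h5 := h0.congr_of_eventuallyEq he.symm
    have hv : gl (a+2) u - a * gl (a+1) u = 0 := by
      rw [gl_nonpos hu.le, gl_nonpos hu.le]; ring
    rw [hv]; exact h5
  · subst hu
    rw [gl_nonpos le_rfl, gl_nonpos le_rfl, mul_zero, sub_zero]
    rw [hasDerivAt_iff_tendsto_slope]
    have hsl : slope (gl a) 0 = fun u => u⁻¹ * gl a u := by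
      funext v; simp [slope, gl_nonpos le_rfl]
    rw [hsl, ← nhdsLT_sup_nhdsGT, tendsto_sup]
    constructor
    · have hE : (fun v : ℝ => v⁻¹ * gl a v) =ᶠ[nhdsWithin (0:ℝ) (Set.Iio 0)] (fun _ => (0:ℝ)) := by
        filter_upwards [self_mem_nhdsWithin] with v (hv : v < 0)
        rw [gl_nonpos hv.le, mul_zero]
      exact tendsto_const_nhds.congr' hE.symm
    · have h := gl_tendsto (a+1)
      refine h.congr' ?_
      filter_upwards [self_mem_nhdsWithin] with v (hv : 0 < v)
      rw [gl_pos hv, neg_add, Real.rpow_add hv, Real.rpow_neg_one]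
      ring
  · have key : HasDerivAt (fun v : ℝ => Real.exp (-1/v) * v ^ (-a))
        (gl (a+2) u - a * gl (a+1) u) u := by
      have h1 : HasDerivAt (fun v : ℝ => -1/v) ((u^2)⁻¹) u := by
        have e : (fun v : ℝ => -1/v) = fun v => (-1) * v⁻¹ := by funext v; ring
        rw [e]
        exact ((hasDerivAt_inv hu.ne').const_mul (-1:ℝ)).congr_deriv (by ring)
      have h2 : HasDerivAt (fun v : ℝ => Real.exp (-1/v)) (Real.exp (-1/u) * (u^2)⁻¹) u := by
        simpa [mul_comm] using h1.exp
      have h3 : HasDerivAt (fun v : ℝ => v ^ (-a)) (-a * u ^ (-a-1)) u :=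
        Real.hasDerivAt_rpow_const (Or.inl hu.ne')
      have h4 : HasDerivAt (fun v : ℝ => Real.exp (-1/v) * v ^ (-a)) _ u := h2.mul h3
      convert h4 using 1
      rw [gl_pos (by positivity : (0:ℝ) < u), gl_pos (by positivity : (0:ℝ) < u)]
      have e1 : u ^ (-(a+2)) = (u^2)⁻¹ * u ^ (-a) := by
        rw [neg_add, Real.rpow_add hu, mul_comm]
        congr 1
        rw [← Real.rpow_natCast u 2, ← Real.rpow_neg hu.le]
        norm_num
      have e2 : u ^ (-(a+1)) = u ^ (-a-1) := by ring_nf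
      rw [e1, e2]; ring
    have he : (fun v : ℝ => Real.exp (-1/v) * v ^ (-a)) =ᶠ[nhds u] gl a := by
      filter_upwards [Ioi_mem_nhds hu] with v (hv : 0 < v)
      rw [gl_pos hv]
    exact key.congr_of_eventuallyEq he.symm

lemma gl_deriv (a : ℝ) : deriv (gl a) = fun u => gl (a+2) u - a * gl (a+1) u := by
  funext u; exact (gl_hasDerivAt a u).deriv

lemma gl_contDiff_nat : ∀ (n : ℕ) (a : ℝ), ContDiff ℝ n (gl a) := by
  intro n
  induction n with
  | zero =>
    intro a
    rw [show ((0:ℕ) : WithTop ℕ∞) = 0 from rfl, contDiff_zero]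
    exact continuous_iff_continuousAt.2 fun u =>
      (gl_hasDerivAt a u).differentiableAt.continuousAt
  | succ n ih =>
    intro a
    have : ((n+1 : ℕ) : WithTop ℕ∞) = (n : WithTop ℕ∞) + 1 := by push_cast; ring
    rw [this, contDiff_succ_iff_deriv]
    refine ⟨fun u => (gl_hasDerivAt a u).differentiableAt, by simp, ?_⟩
    rw [gl_deriv]
    exact (ih (a+2)).sub (contDiff_const.mul (ih (a+1)))

lemma gl_contDiff (a : ℝ) : ContDiff ℝ ∞ (gl a) :=
  contDiff_infty.2 fun n => gl_contDiff_nat n a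

/-! ### Smoothness of the heat kernel away from the origin -/

lemma heatK_eq_gl (d : ℕ) (p : ℝ × (Fin d → ℝ)) (hr : 0 < ∑ i, (p.2 i)^2) :
    heatK d p = (Real.pi * ∑ i, (p.2 i)^2) ^ (-(d:ℝ)/2)
      * gl ((d:ℝ)/2) (4 * p.1 / ∑ i, (p.2 i)^2) := by
  set r := ∑ i, (p.2 i)^2 with hrdef
  by_cases ht : 0 < p.1
  · have hu : 0 < 4 * p.1 / r := by positivity
    rw [heatK, if_pos ht, gl_pos hu]
    have h1 : -1 / (4 * p.1 / r) = -r / (4 * p.1) := by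
      field_simp
    rw [h1]
    have h2 : (Real.pi * r) ^ (-(d:ℝ)/2) * (4 * p.1 / r) ^ (-(d:ℝ)/2)
        = (4 * Real.pi * p.1) ^ (-(d:ℝ)/2) := by
      rw [← Real.mul_rpow (by positivity) (by positivity)]
      congr 1
      field_simp
    rw [← h2]; simp only [← hrdef]; ring
  · have hu : 4 * p.1 / r ≤ 0 := by
      apply div_nonpos_of_nonpos_of_nonneg
      · nlinarith [not_lt.1 ht]
      · exact hr.le
    rw [heatK, if_neg ht, gl_nonpos hu, mul_zero]

lemma contDiff_sumsq (d : ℕ) :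
    ContDiff ℝ ∞ (fun p : ℝ × (Fin d → ℝ) => ∑ i, (p.2 i)^2) := by
  apply ContDiff.sum
  intro i _
  exact ((contDiff_apply ℝ ℝ i).comp contDiff_snd).pow 2

lemma heatK_contDiffAt (d : ℕ) (p : ℝ × (Fin d → ℝ)) (hp : p ≠ (0, 0)) :
    ContDiffAt ℝ ∞ (heatK d) p := by
  rcases lt_trichotomy p.1 0 with ht | ht | ht
  · have hev : (fun _ : ℝ × (Fin d → ℝ) => (0:ℝ)) =ᶠ[nhds p] heatK d := by
      have hopen : IsOpen {q : ℝ × (Fin d → ℝ) | q.1 < 0} :=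
        isOpen_lt continuous_fst continuous_const
      filter_upwards [hopen.mem_nhds ht] with q (hq : q.1 < 0)
      rw [heatK, if_neg (not_lt.2 hq.le)]
    exact contDiffAt_const.congr_of_eventuallyEq hev.symm
  · have hx : p.2 ≠ 0 := by
      intro h
      apply hp
      have : p = (p.1, p.2) := rfl
      rw [this, ht, h]
    obtain ⟨i, hi⟩ := Function.ne_iff.1 hx
    have hr : 0 < ∑ j, (p.2 j)^2 := by
      apply Finset.sum_pos' (fun j _ => sq_nonneg _)
      exact ⟨i, Finset.mem_univ i, pow_two_pos_of_ne_zero (by simpa using hi)⟩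
    have hopen : IsOpen {q : ℝ × (Fin d → ℝ) | 0 < ∑ j, (q.2 j)^2} :=
      isOpen_lt continuous_const (contDiff_sumsq d).continuous
    have hsm : ContDiffAt ℝ ∞ (fun q : ℝ × (Fin d → ℝ) =>
        (Real.pi * ∑ j, (q.2 j)^2) ^ (-(d:ℝ)/2)
          * gl ((d:ℝ)/2) (4 * q.1 / ∑ j, (q.2 j)^2)) p := by
      apply ContDiffAt.mul
      · apply ContDiffAt.rpow_const_of_ne
        · exact (contDiff_const.mul (contDiff_sumsq d)).contDiffAt
        · positivity
      · exact ContDiffAt.comp p ((gl_contDiff _).contDiffAt)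
          (ContDiffAt.div ((contDiff_const.mul contDiff_fst).contDiffAt)
            ((contDiff_sumsq d).contDiffAt) hr.ne')
    apply hsm.congr_of_eventuallyEq
    filter_upwards [hopen.mem_nhds hr] with q (hq : 0 < ∑ j, (q.2 j)^2)
    exact heatK_eq_gl d q hq
  · have hsm : ContDiffAt ℝ ∞ (fun q : ℝ × (Fin d → ℝ) =>
        (4 * Real.pi * q.1) ^ (-(d:ℝ)/2)
          * Real.exp (-(∑ j, (q.2 j)^2) / (4 * q.1))) p := by
      apply ContDiffAt.mul
      · apply ContDiffAt.rpow_const_of_ne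
        · exact (contDiff_const.mul contDiff_fst).contDiffAt
        · positivity
      · apply ContDiffAt.exp
        apply ContDiffAt.div
        · exact (contDiff_sumsq d).contDiffAt.neg
        · exact (contDiff_const.mul contDiff_fst).contDiffAt
        · positivity
    apply hsm.congr_of_eventuallyEq
    have hopen : IsOpen {q : ℝ × (Fin d → ℝ) | 0 < q.1} :=
      isOpen_lt continuous_const continuous_fst
    filter_upwards [hopen.mem_nhds ht] with q (hq : 0 < q.1)
    rw [heatK, if_pos hq]

lemma heatK_contDiffOn (d : ℕ) :
    ContDiffOn ℝ ∞ (heatK d) {p : ℝ × (Fin d → ℝ) | p ≠ (0, 0)} :=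
  fun p hp => (heatK_contDiffAt d p hp).contDiffWithinAt

/-! ### Smoothness is preserved by the partial-derivative operators -/

lemma hasDerivAt_update' {d : ℕ} (x : Fin d → ℝ) (i : Fin d) (s : ℝ) :
    HasDerivAt (fun u => Function.update x i u) (Pi.single i 1) s := by
  have heq : (fun u : ℝ => Function.update x i u)
      = fun u : ℝ => x + (u - x i) • (Pi.single i 1 : Fin d → ℝ) := by
    funext u; funext j
    by_cases h : j = i
    · subst h; simp [Function.update_apply]
    · simp [Function.update_apply, h, Pi.single_apply]
  rw [heq]
  have h1 : HasDerivAt (fun u : ℝ => (u - x i)) 1 s := (hasDerivAt_id s).sub_const _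
  have h2 := h1.smul_const (Pi.single i 1 : Fin d → ℝ)
  simpa using h2.const_add x

lemma pderivT_hasDerivAt {d : ℕ} {F : ℝ × (Fin d → ℝ) → ℝ} {p : ℝ × (Fin d → ℝ)}
    (hF : DifferentiableAt ℝ F p) :
    HasDerivAt (fun t => F (t, p.2)) (fderiv ℝ F p (1, 0)) p.1 := by
  have h1 : HasDerivAt (fun t : ℝ => (t, p.2)) ((1:ℝ), (0 : Fin d → ℝ)) p.1 :=
    (hasDerivAt_id p.1).prodMk (hasDerivAt_const _ _)
  exact hF.hasFDerivAt.comp_hasDerivAt p.1 h1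

lemma pderivX_hasDerivAt {d : ℕ} {F : ℝ × (Fin d → ℝ) → ℝ} {p : ℝ × (Fin d → ℝ)} (i : Fin d)
    (hF : DifferentiableAt ℝ F p) :
    HasDerivAt (fun s => F (p.1, Function.update p.2 i s))
      (fderiv ℝ F p ((0:ℝ), Pi.single i 1)) (p.2 i) := by
  have h1 : HasDerivAt (fun s : ℝ => (p.1, Function.update p.2 i s))
      ((0:ℝ), Pi.single i (1:ℝ)) (p.2 i) :=
    (hasDerivAt_const _ _).prodMk (hasDerivAt_update' p.2 i (p.2 i))
  have h2 : HasFDerivAt F (fderiv ℝ F p) (p.1, Function.update p.2 i (p.2 i)) := by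
    rw [Function.update_eq_self]
    exact hF.hasFDerivAt
  exact h2.comp_hasDerivAt (p.2 i) h1

lemma pderivT_contDiffOn {d : ℕ} {F : ℝ × (Fin d → ℝ) → ℝ} {U : Set (ℝ × (Fin d → ℝ))}
    (hU : IsOpen U) (hF : ContDiffOn ℝ ∞ F U) : ContDiffOn ℝ ∞ (pderivT F) U := by
  have h1 : ContDiffOn ℝ ∞ (fderiv ℝ F) U :=
    hF.fderiv_of_isOpen hU (le_of_eq rfl)
  have h2 : ContDiffOn ℝ ∞ (fun p => fderiv ℝ F p ((1:ℝ), (0 : Fin d → ℝ))) U :=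
    h1.clm_apply contDiffOn_const
  apply h2.congr
  intro p hp
  have hd : DifferentiableAt ℝ F p :=
    (hF.contDiffAt (hU.mem_nhds hp)).differentiableAt (by simp)
  exact (pderivT_hasDerivAt hd).deriv

lemma pderivX_contDiffOn {d : ℕ} {F : ℝ × (Fin d → ℝ) → ℝ} {U : Set (ℝ × (Fin d → ℝ))}
    (i : Fin d) (hU : IsOpen U) (hF : ContDiffOn ℝ ∞ F U) :
    ContDiffOn ℝ ∞ (pderivX i F) U := by
  have h1 : ContDiffOn ℝ ∞ (fderiv ℝ F) U :=
    hF.fderiv_of_isOpen hU (le_of_eq rfl)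
  have h2 : ContDiffOn ℝ ∞ (fun p => fderiv ℝ F p ((0:ℝ), Pi.single i (1:ℝ))) U :=
    h1.clm_apply contDiffOn_const
  apply h2.congr
  intro p hp
  have hd : DifferentiableAt ℝ F p :=
    (hF.contDiffAt (hU.mem_nhds hp)).differentiableAt (by simp)
  exact (pderivX_hasDerivAt i hd).deriv

lemma pderivT_iter_contDiffOn {d : ℕ} {U : Set (ℝ × (Fin d → ℝ))} (hU : IsOpen U) (n : ℕ) :
    ∀ {F : ℝ × (Fin d → ℝ) → ℝ}, ContDiffOn ℝ ∞ F U →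
      ContDiffOn ℝ ∞ ((pderivT)^[n] F) U := by
  induction n with
  | zero => intro F hF; exact hF
  | succ n ih =>
    intro F hF
    rw [Function.iterate_succ_apply']
    exact pderivT_contDiffOn hU (ih hF)

lemma pderivX_iter_contDiffOn {d : ℕ} {U : Set (ℝ × (Fin d → ℝ))} (i : Fin d)
    (hU : IsOpen U) (n : ℕ) :
    ∀ {F : ℝ × (Fin d → ℝ) → ℝ}, ContDiffOn ℝ ∞ F U →
      ContDiffOn ℝ ∞ ((pderivX i)^[n] F) U := by
  induction n with
  | zero => intro F hF; exact hF
  | succ n ih =>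
    intro F hF
    rw [Function.iterate_succ_apply']
    exact pderivX_contDiffOn i hU (ih hF)

lemma foldr_contDiffOn {d : ℕ} {U : Set (ℝ × (Fin d → ℝ))} (k : Fin d → ℕ)
    (hU : IsOpen U) (L : List (Fin d)) :
    ∀ {F : ℝ × (Fin d → ℝ) → ℝ}, ContDiffOn ℝ ∞ F U →
      ContDiffOn ℝ ∞ (List.foldr (fun i F => (pderivX i)^[k i] F) F L) U := by
  induction L with
  | nil => intro F hF; exact hF
  | cons i L ih =>
    intro F hF
    exact pderivX_iter_contDiffOn i hU (k i) (ih hF)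

/-! ### Parabolic homogeneity -/

def HomDeg {d : ℕ} (m : ℝ) (F : ℝ × (Fin d → ℝ) → ℝ) : Prop :=
  ∀ c : ℝ, 0 < c → ∀ (t : ℝ) (x : Fin d → ℝ), F (c^2 * t, c • x) = c ^ (-m) * F (t, x)

lemma homDeg_congr {d : ℕ} {m m' : ℝ} {F : ℝ × (Fin d → ℝ) → ℝ}
    (h : m = m') (hF : HomDeg m F) : HomDeg m' F := h ▸ hF

lemma deriv_comp_mul_left' (c : ℝ) (hc : c ≠ 0) (f : ℝ → ℝ) (x : ℝ) :
    deriv (fun y => f (c * y)) x = c * deriv f (c * x) := by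
  by_cases h : DifferentiableAt ℝ f (c * x)
  · have h1 : HasDerivAt (fun y : ℝ => c * y) c x := by
      simpa using (hasDerivAt_id x).const_mul c
    have h2 := (h.hasDerivAt.comp x h1)
    have h3 : HasDerivAt (fun y => f (c * y)) (deriv f (c * x) * c) x := h2
    rw [h3.deriv]; ring
  · have h2 : ¬ DifferentiableAt ℝ (fun y => f (c * y)) x := by
      intro hd
      have hd' : DifferentiableAt ℝ (fun y => f (c * y)) (c⁻¹ * (c * x)) := by
        rwa [inv_mul_cancel_left₀ hc]
      have hinner : DifferentiableAt ℝ (fun z : ℝ => c⁻¹ * z) (c * x) :=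
        differentiableAt_id.const_mul _
      have h3 := DifferentiableAt.comp (c * x) hd' hinner
      apply h
      have he : ((fun y => f (c * y)) ∘ fun z : ℝ => c⁻¹ * z) = f := by
        funext z; simp [Function.comp, mul_inv_cancel_left₀ hc]
      rwa [he] at h3
    rw [deriv_zero_of_not_differentiableAt h, deriv_zero_of_not_differentiableAt h2, mul_zero]

lemma rpow_neg_two {c : ℝ} (hc : 0 < c) : c ^ (-2 : ℝ) = (c ^ 2)⁻¹ := by
  rw [← Real.rpow_natCast c 2, ← Real.rpow_neg hc.le]
  norm_num

lemma homDeg_heatK (d : ℕ) : HomDeg (d : ℝ) (heatK d) := by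
  intro c hc t x
  by_cases ht : 0 < t
  · have hct : 0 < c^2 * t := by positivity
    rw [heatK, heatK]
    simp only [if_pos ht, if_pos hct]
    have hsum : ∑ i, ((c • x) i)^2 = c^2 * ∑ i, (x i)^2 := by
      rw [Finset.mul_sum]
      refine Finset.sum_congr rfl fun i _ => ?_
      simp [Pi.smul_apply, smul_eq_mul]; ring
    rw [hsum]
    have hexp : -(c^2 * ∑ i, (x i)^2) / (4 * (c^2 * t)) = -(∑ i, (x i)^2) / (4 * t) := by
      rw [div_eq_div_iff (by positivity) (by positivity)]
      ring
    rw [hexp]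
    have hpow : (4 * Real.pi * (c^2 * t)) ^ (-(d:ℝ)/2)
        = c ^ (-(d:ℝ)) * (4 * Real.pi * t) ^ (-(d:ℝ)/2) := by
      have h1 : 4 * Real.pi * (c^2 * t) = c^2 * (4 * Real.pi * t) := by ring
      rw [h1, Real.mul_rpow (by positivity) (by positivity)]
      congr 1
      rw [← Real.rpow_natCast c 2, ← Real.rpow_mul hc.le]
      congr 1
      ring
    rw [hpow]; ring
  · have hct : ¬ 0 < c^2 * t := by
      intro h
      have := not_lt.1 ht
      nlinarith
    rw [heatK, heatK]
    simp only [if_neg ht, if_neg hct, mul_zero]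

lemma homDeg_pderivT {d : ℕ} {m : ℝ} {F : ℝ × (Fin d → ℝ) → ℝ}
    (h : HomDeg m F) : HomDeg (m + 2) (pderivT F) := by
  intro c hc t x
  have hc2 : (c:ℝ)^2 ≠ 0 := by positivity
  have hfun : (fun s => F (s, c • x)) = fun s => c ^ (-m) * F ((c^2)⁻¹ * s, x) := by
    funext s
    have := h c hc ((c^2)⁻¹ * s) x
    rw [mul_inv_cancel_left₀ hc2] at this
    exact this
  show deriv (fun s => F (s, c • x)) (c^2 * t) = _
  rw [hfun]
  have key := deriv_comp_mul_left' ((c^2)⁻¹) (inv_ne_zero hc2)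
    (fun u => c ^ (-m) * F (u, x)) (c^2 * t)
  rw [key, inv_mul_cancel_left₀ hc2, deriv_const_mul_field]
  have hexp : c ^ (-(m+2)) = (c^2)⁻¹ * c ^ (-m) := by
    rw [← rpow_neg_two hc, ← Real.rpow_add hc]
    ring_nf
  rw [hexp]
  show _ = (c ^ 2)⁻¹ * c ^ (-m) * deriv (fun s => F (s, x)) t
  ring

lemma homDeg_pderivX {d : ℕ} {m : ℝ} {F : ℝ × (Fin d → ℝ) → ℝ} (i : Fin d)
    (h : HomDeg m F) : HomDeg (m + 1) (pderivX i F) := by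
  intro c hc t x
  have hupd : ∀ s : ℝ, Function.update (c • x) i s = c • Function.update x i (c⁻¹ * s) := by
    intro s
    funext j
    by_cases hj : j = i
    · subst hj; simp [Function.update_self, mul_inv_cancel_left₀ hc.ne']
    · simp [Function.update_of_ne hj]
  have hfun : (fun s => F (c^2 * t, Function.update (c • x) i s))
      = fun s => c ^ (-m) * F (t, Function.update x i (c⁻¹ * s)) := by
    funext s
    rw [hupd s]
    exact h c hc t (Function.update x i (c⁻¹ * s))
  show deriv (fun s => F ((c^2*t, c • x).1, Function.update (c^2*t, c • x).2 i s))
      ((c^2*t, c • x).2 i) = _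
  have hsnd : (c^2*t, c • x).2 i = c * x i := rfl
  rw [hsnd]
  show deriv (fun s => F (c^2 * t, Function.update (c • x) i s)) (c * x i) = _
  rw [hfun]
  have key := deriv_comp_mul_left' (c⁻¹) (inv_ne_zero hc.ne')
    (fun u => c ^ (-m) * F (t, Function.update x i u)) (c * x i)
  rw [key, inv_mul_cancel_left₀ hc.ne', deriv_const_mul_field]
  have hexp : c ^ (-(m+1)) = c⁻¹ * c ^ (-m) := by
    rw [← Real.rpow_neg_one c, ← Real.rpow_add hc]
    ring_nf
  rw [hexp]
  show _ = c⁻¹ * c ^ (-m) * deriv (fun s => F (t, Function.update x i s)) (x i)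
  ring

lemma homDeg_iterT {d : ℕ} (n : ℕ) :
    ∀ {m : ℝ} {F : ℝ × (Fin d → ℝ) → ℝ}, HomDeg m F →
      HomDeg (m + 2 * n) ((pderivT)^[n] F) := by
  induction n with
  | zero => intro m F h; exact homDeg_congr (by push_cast; ring) h
  | succ n ih =>
    intro m F h
    rw [Function.iterate_succ_apply']
    exact homDeg_congr (by push_cast; ring) (homDeg_pderivT (ih h))

lemma homDeg_iterX {d : ℕ} (i : Fin d) (n : ℕ) :
    ∀ {m : ℝ} {F : ℝ × (Fin d → ℝ) → ℝ}, HomDeg m F →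
      HomDeg (m + n) ((pderivX i)^[n] F) := by
  induction n with
  | zero => intro m F h; exact homDeg_congr (by push_cast; ring) h
  | succ n ih =>
    intro m F h
    rw [Function.iterate_succ_apply']
    exact homDeg_congr (by push_cast; ring) (homDeg_pderivX i (ih h))

lemma homDeg_foldr {d : ℕ} (k : Fin d → ℕ) (L : List (Fin d)) :
    ∀ {m : ℝ} {F : ℝ × (Fin d → ℝ) → ℝ}, HomDeg m F →
      HomDeg (m + ((L.map fun i => (k i : ℝ)).sum))
        (List.foldr (fun i F => (pderivX i)^[k i] F) F L) := by
  induction L with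
  | nil => intro m F h; exact homDeg_congr (by simp) h
  | cons i L ih =>
    intro m F h
    have h1 := homDeg_iterX i (k i) (ih h)
    refine homDeg_congr ?_ h1
    simp [List.map_cons, List.sum_cons]
    ring

/-! ### Main theorem -/

/-- Parabolic scaling bound for the heat kernel: for every `l ∈ ℕ`, `k ∈ ℕ^d`
there is `C(d,l,k)` such that `|∂_t^l ∂_x^k Φ(t,x)| ≤ C · ‖(t,x)‖_𝔰^{−d−2l−|k|₁}` for all
`(t,x) ≠ 0`, where `‖(t,x)‖_𝔰 = (|t| + |x|²)^{1/2}` is the parabolic metric. -/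
theorem heat_kernel_parabolic_scaling_bound (d l : ℕ) (k : Fin d → ℕ) :
    ∃ C : ℝ, 0 < C ∧ ∀ (t : ℝ) (x : Fin d → ℝ), (t, x) ≠ (0, 0) →
      |pmixed l k (heatK d) (t, x)|
        ≤ C * ((|t| + ∑ i, (x i) ^ 2) ^ ((1 : ℝ) / 2))
            ^ (-(d : ℝ) - 2 * (l : ℝ) - ((∑ i, k i : ℕ) : ℝ)) := by
  classical
  have hUopen : IsOpen {p : ℝ × (Fin d → ℝ) | p ≠ (0, 0)} := isOpen_ne
  have hsmooth : ContDiffOn ℝ ∞ (pmixed l k (heatK d)) {p : ℝ × (Fin d → ℝ) | p ≠ (0, 0)} := by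
    unfold pmixed
    exact pderivT_iter_contDiffOn hUopen l
      (foldr_contDiffOn k hUopen (List.finRange d) (heatK_contDiffOn d))
  have hhom : HomDeg ((d : ℝ) + ((List.finRange d).map fun i => (k i : ℝ)).sum + 2 * l)
      (pmixed l k (heatK d)) := by
    unfold pmixed
    exact homDeg_iterT l (homDeg_foldr k (List.finRange d) (homDeg_heatK d))
  -- the parabolic sphere
  set S : Set (ℝ × (Fin d → ℝ)) := {p | |p.1| + ∑ i, (p.2 i)^2 = 1} with hSdef
  have hSU : S ⊆ {p : ℝ × (Fin d → ℝ) | p ≠ (0, 0)} := by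
    intro p hp hpe
    rw [hSdef] at hp
    rw [hpe] at hp
    simp at hp
  have hSclosed : IsClosed S :=
    isClosed_eq (continuous_fst.abs.add (contDiff_sumsq d).continuous) continuous_const
  have hSbdd : Bornology.IsBounded S := by
    apply (Metric.isBounded_closedBall (x := (0 : ℝ × (Fin d → ℝ))) (r := 1)).subset
    intro p hp
    have hp' : |p.1| + ∑ i, (p.2 i)^2 = 1 := hp
    have hs0 : 0 ≤ ∑ i, (p.2 i)^2 := Finset.sum_nonneg fun i _ => sq_nonneg _
    rw [Metric.mem_closedBall, dist_zero_right, Prod.norm_def]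
    apply max_le
    · rw [Real.norm_eq_abs]; linarith
    · rw [pi_norm_le_iff_of_nonneg (by norm_num : (0:ℝ) ≤ 1)]
      intro i
      rw [Real.norm_eq_abs]
      have hterm : (p.2 i)^2 ≤ 1 := by
        have := Finset.single_le_sum (fun j _ => sq_nonneg (p.2 j)) (Finset.mem_univ i)
        have h0 := abs_nonneg p.1
        linarith
      nlinarith [sq_abs (p.2 i), abs_nonneg (p.2 i)]
  have hScomp : IsCompact S := Metric.isCompact_of_isClosed_isBounded hSclosed hSbdd
  obtain ⟨C0, hC0⟩ := hScomp.exists_bound_of_continuousOn (hsmooth.continuousOn.mono hSU)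
  refine ⟨max C0 1, lt_of_lt_of_le one_pos (le_max_right _ _), ?_⟩
  intro t x hne
  have hs0 : 0 ≤ ∑ i, (x i)^2 := Finset.sum_nonneg fun i _ => sq_nonneg _
  have hR : 0 < |t| + ∑ i, (x i)^2 := by
    rcases (add_nonneg (abs_nonneg t) hs0).lt_or_eq with h | h
    · exact h
    · exfalso
      apply hne
      have ht0 : |t| = 0 := by
        have := abs_nonneg t
        linarith
      have hsum0 : ∑ i, (x i)^2 = 0 := by linarith
      have ht : t = 0 := abs_eq_zero.1 ht0
      have hx : x = 0 := by
        funext i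
        have hi : (x i)^2 = 0 :=
          (Finset.sum_eq_zero_iff_of_nonneg (fun j _ => sq_nonneg (x j))).1 hsum0
            i (Finset.mem_univ i)
        have := pow_eq_zero_iff (n := 2) (by norm_num) |>.1 hi
        simpa using this
      rw [ht, hx]
  set ρ : ℝ := (|t| + ∑ i, (x i)^2) ^ ((1:ℝ)/2) with hρdef
  have hρ : 0 < ρ := Real.rpow_pos_of_pos hR _
  have hρ2 : ρ^2 = |t| + ∑ i, (x i)^2 := by
    rw [hρdef, ← Real.rpow_natCast ((|t| + ∑ i, (x i)^2) ^ ((1:ℝ)/2)) 2,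
      ← Real.rpow_mul hR.le]
    norm_num
  have hmem : (t / ρ^2, ρ⁻¹ • x) ∈ S := by
    show |t / ρ^2| + ∑ i, ((ρ⁻¹ • x) i)^2 = 1
    have h1 : |t / ρ^2| = |t| / (|t| + ∑ i, (x i)^2) := by
      rw [abs_div, hρ2, abs_of_pos hR]
    have h2 : ∑ i, ((ρ⁻¹ • x) i)^2 = (∑ i, (x i)^2) / (|t| + ∑ i, (x i)^2) := by
      have hterm : ∀ i : Fin d, ((ρ⁻¹ • x) i)^2 = (ρ^2)⁻¹ * (x i)^2 := by
        intro i
        simp only [Pi.smul_apply, smul_eq_mul]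
        rw [mul_pow, inv_pow]
      rw [Finset.sum_congr rfl fun i _ => hterm i, ← Finset.mul_sum, hρ2,
        inv_mul_eq_div]
    rw [h1, h2, ← add_div, div_self hR.ne']
  have heq : (t, x) = (ρ^2 * (t / ρ^2), ρ • (ρ⁻¹ • x)) := by
    rw [mul_div_cancel₀ _ (by positivity : ρ^2 ≠ 0), smul_inv_smul₀ hρ.ne']
  have hval := hhom ρ hρ (t / ρ^2) (ρ⁻¹ • x)
  rw [← heq] at hval
  have hbound : |pmixed l k (heatK d) (t / ρ^2, ρ⁻¹ • x)| ≤ max C0 1 := by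
    have := hC0 _ hmem
    rw [Real.norm_eq_abs] at this
    exact le_trans this (le_max_left _ _)
  have hsumlist : ((List.finRange d).map fun i => (k i : ℝ)).sum = ((∑ i, k i : ℕ) : ℝ) := by
    push_cast
    rw [Fin.sum_univ_def]
  have hexp : ρ ^ (-((d : ℝ) + ((List.finRange d).map fun i => (k i : ℝ)).sum + 2 * l))
      = ρ ^ (-(d : ℝ) - 2 * (l : ℝ) - ((∑ i, k i : ℕ) : ℝ)) := by
    congr 1
    rw [hsumlist]
    ring
  rw [hval, abs_mul, abs_of_pos (Real.rpow_pos_of_pos hρ _), hexp]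
  calc ρ ^ (-(d : ℝ) - 2 * (l : ℝ) - ((∑ i, k i : ℕ) : ℝ))
        * |pmixed l k (heatK d) (t / ρ^2, ρ⁻¹ • x)|
      ≤ ρ ^ (-(d : ℝ) - 2 * (l : ℝ) - ((∑ i, k i : ℕ) : ℝ)) * max C0 1 :=
        mul_le_mul_of_nonneg_left hbound (Real.rpow_pos_of_pos hρ _).le
    _ = max C0 1 * ρ ^ (-(d : ℝ) - 2 * (l : ℝ) - ((∑ i, k i : ℕ) : ℝ)) := mul_comm _ _
end

section
/- (Regularized porous-medium coefficient) Fix M with 1 < M < 2 and ε > 0. Let a(v) = M|v|^{M−1} and define a_ε by: a_ε(v) = a(v) for |v| ≥ ε, and a_ε(v) = p₄v⁴ + p₂v² + p₀ for |v| ≤ ε, where p₄ = M(M−1)(M−3)ε^{M−5}/8, p₂ = M(M−1)(5−M)ε^{M−3}/4, p₀ = M(1 − (M−1)(7−M)/8)ε^{M−1}. Then a_ε ∈ C²(ℝ) (i.e., a_ε, a_ε', a_ε'' match at v = ±ε), a_ε(v) ≥ p₀ > 0 for all v, and a_ε(v) ≥ a(v) for all v. -/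
open Set Filter

set_option maxHeartbeats 2000000
/-- Derivative of `|w| ^ γ` (rpow) away from `0`. -/
lemma pm_habs (γ : ℝ) {v : ℝ} (hv : v ≠ 0) :
    HasDerivAt (fun w : ℝ => |w| ^ γ) (γ * |v| ^ (γ - 2) * v) v := by
  rcases hv.lt_or_gt with h | h
  · have h0 : (-v) ≠ 0 := by simp [hv]
    have h1 : HasDerivAt (fun w : ℝ => (-w) ^ γ) (γ * (-v) ^ (γ - 1) * (-1)) v :=
      (Real.hasDerivAt_rpow_const (p := γ) (Or.inl h0)).comp v (hasDerivAt_neg v)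
    have h2 : HasDerivAt (fun w : ℝ => |w| ^ γ) (γ * (-v) ^ (γ - 1) * (-1)) v := by
      apply h1.congr_of_eventuallyEq
      filter_upwards [Iio_mem_nhds h] with w hw
      rw [abs_of_neg hw]
    convert h2 using 1
    have hvpos : (0:ℝ) < -v := by linarith
    have : (-v) ^ (γ - 2) * (-v) = (-v) ^ (γ - 1) := by
      rw [show γ - 1 = (γ - 2) + 1 by ring, Real.rpow_add hvpos, Real.rpow_one]
    rw [abs_of_neg h]
    linear_combination -γ * this
  · have h2 : HasDerivAt (fun w : ℝ => |w| ^ γ) (γ * v ^ (γ - 1)) v := by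
      apply (Real.hasDerivAt_rpow_const (p := γ) (Or.inl h.ne')).congr_of_eventuallyEq
      filter_upwards [Ioi_mem_nhds h] with w hw
      rw [abs_of_pos hw]
    convert h2 using 1
    have : v ^ (γ - 2) * v = v ^ (γ - 1) := by
      rw [show γ - 1 = (γ - 2) + 1 by ring, Real.rpow_add h, Real.rpow_one]
    rw [abs_of_pos h]
    linear_combination γ * this

/-- Gluing a derivative at the right gluing point `c`. -/
lemma pm_glue {f g F : ℝ → ℝ} {c L : ℝ} (hc : 0 < c)
    (hf : HasDerivAt f L c) (hg : HasDerivAt g L c) (hfg : f c = g c)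
    (hF1 : ∀ v, c ≤ |v| → F v = f v) (hF2 : ∀ v, |v| < c → F v = g v) :
    HasDerivAt F L c := by
  have hFc : F c = f c := hF1 c (by rw [abs_of_pos hc])
  have h1 : HasDerivWithinAt F L (Ici c) c := by
    apply hf.hasDerivWithinAt.congr (fun v hv => ?_) hFc
    exact hF1 v (by rw [abs_of_pos (lt_of_lt_of_le hc hv)]; exact hv)
  have h2 : HasDerivWithinAt F L (Iic c) c := by
    apply hg.hasDerivWithinAt.congr_of_eventuallyEq ?_ (hFc.trans hfg)
    filter_upwards [nhdsWithin_le_nhds (Ioi_mem_nhds (by linarith : -c < c)),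
      self_mem_nhdsWithin] with w hw1 (hw2 : w ≤ c)
    rcases eq_or_lt_of_le hw2 with rfl | hlt
    · exact hFc.trans hfg
    · exact hF2 w (abs_lt.2 ⟨hw1, hlt⟩)
  have := h2.union h1
  rw [Iic_union_Ici] at this
  exact hasDerivWithinAt_univ.1 this

/-- Gluing a derivative at the left gluing point `-c`. -/
lemma pm_glue_neg {f g F : ℝ → ℝ} {c L : ℝ} (hc : 0 < c)
    (hf : HasDerivAt f L (-c)) (hg : HasDerivAt g L (-c)) (hfg : f (-c) = g (-c))
    (hF1 : ∀ v, c ≤ |v| → F v = f v) (hF2 : ∀ v, |v| < c → F v = g v) :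
    HasDerivAt F L (-c) := by
  have hFc : F (-c) = f (-c) := hF1 (-c) (by rw [abs_neg, abs_of_pos hc])
  have h1 : HasDerivWithinAt F L (Iic (-c)) (-c) := by
    apply hf.hasDerivWithinAt.congr (fun v hv => ?_) hFc
    refine hF1 v ?_
    have : v ≤ -c := hv
    rw [abs_of_neg (by linarith)]; linarith
  have h2 : HasDerivWithinAt F L (Ici (-c)) (-c) := by
    apply hg.hasDerivWithinAt.congr_of_eventuallyEq ?_ (hFc.trans hfg)
    filter_upwards [nhdsWithin_le_nhds (Iio_mem_nhds (by linarith : -c < c)),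
      self_mem_nhdsWithin] with w hw1 (hw2 : -c ≤ w)
    rcases eq_or_lt_of_le hw2 with h | hlt
    · rw [← h]; exact hFc.trans hfg
    · exact hF2 w (abs_lt.2 ⟨hlt, hw1⟩)
  have := h1.union h2
  rw [Iic_union_Ici] at this
  exact hasDerivWithinAt_univ.1 this

/-- Gluing continuity at the gluing points `±c`. -/
lemma pm_gluec {f g F : ℝ → ℝ} {c : ℝ} (hc : 0 < c)
    (hf : ContinuousAt f c) (hg : ContinuousAt g c) (hfg : f c = g c)
    (hF1 : ∀ v, c ≤ |v| → F v = f v) (hF2 : ∀ v, |v| < c → F v = g v) :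
    ContinuousAt F c := by
  have hFc : F c = f c := hF1 c (by rw [abs_of_pos hc])
  have h1 : ContinuousWithinAt F (Ici c) c := by
    apply hf.continuousWithinAt.congr (fun v hv => ?_) hFc
    exact hF1 v (by rw [abs_of_pos (lt_of_lt_of_le hc hv)]; exact hv)
  have h2 : ContinuousWithinAt F (Iic c) c := by
    apply hg.continuousWithinAt.congr_of_eventuallyEq ?_ (hFc.trans hfg)
    filter_upwards [nhdsWithin_le_nhds (Ioi_mem_nhds (by linarith : -c < c)),
      self_mem_nhdsWithin] with w hw1 (hw2 : w ≤ c)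
    rcases eq_or_lt_of_le hw2 with rfl | hlt
    · exact hFc.trans hfg
    · exact hF2 w (abs_lt.2 ⟨hw1, hlt⟩)
  have := h2.union h1
  rw [Iic_union_Ici] at this
  exact (continuousWithinAt_univ F c).1 this

lemma pm_gluec_neg {f g F : ℝ → ℝ} {c : ℝ} (hc : 0 < c)
    (hf : ContinuousAt f (-c)) (hg : ContinuousAt g (-c)) (hfg : f (-c) = g (-c))
    (hF1 : ∀ v, c ≤ |v| → F v = f v) (hF2 : ∀ v, |v| < c → F v = g v) :
    ContinuousAt F (-c) := by
  have hFc : F (-c) = f (-c) := hF1 (-c) (by rw [abs_neg, abs_of_pos hc])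
  have h1 : ContinuousWithinAt F (Iic (-c)) (-c) := by
    apply hf.continuousWithinAt.congr (fun v hv => ?_) hFc
    refine hF1 v ?_
    have : v ≤ -c := hv
    rw [abs_of_neg (by linarith)]; linarith
  have h2 : ContinuousWithinAt F (Ici (-c)) (-c) := by
    apply hg.continuousWithinAt.congr_of_eventuallyEq ?_ (hFc.trans hfg)
    filter_upwards [nhdsWithin_le_nhds (Iio_mem_nhds (by linarith : -c < c)),
      self_mem_nhdsWithin] with w hw1 (hw2 : -c ≤ w)
    rcases eq_or_lt_of_le hw2 with h | hlt
    · rw [← h]; exact hFc.trans hfg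
    · exact hF2 w (abs_lt.2 ⟨hlt, hw1⟩)
  have := h1.union h2
  rw [Iic_union_Ici] at this
  exact (continuousWithinAt_univ F (-c)).1 this

/-- Regularized porous-medium coefficient: for `1 < M < 2`, `ε > 0`,
`a(v) = M|v|^{M−1}` and the quartic replacement `a_ε` on `[−ε,ε]` with coefficients
`p₄ = M(M−1)(M−3)ε^{M−5}/8`, `p₂ = M(M−1)(5−M)ε^{M−3}/4`,
`p₀ = M(1 − (M−1)(7−M)/8)ε^{M−1}`, one has `a_ε ∈ C²(ℝ)`, `a_ε ≥ p₀ > 0`, and `a_ε ≥ a`. -/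
theorem regularized_porous_medium_coefficient (M ε : ℝ) (hM1 : 1 < M) (hM2 : M < 2)
    (hε : 0 < ε) :
    let a : ℝ → ℝ := fun v => M * |v| ^ (M - 1)
    let p₄ : ℝ := M * (M - 1) * (M - 3) * ε ^ (M - 5) / 8
    let p₂ : ℝ := M * (M - 1) * (5 - M) * ε ^ (M - 3) / 4
    let p₀ : ℝ := M * (1 - (M - 1) * (7 - M) / 8) * ε ^ (M - 1)
    let aε : ℝ → ℝ := fun v => if ε ≤ |v| then a v else p₄ * v ^ 4 + p₂ * v ^ 2 + p₀
    ContDiff ℝ 2 aε ∧ 0 < p₀ ∧ (∀ v : ℝ, p₀ ≤ aε v) ∧ (∀ v : ℝ, a v ≤ aε v) := by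
  intro a p₄ p₂ p₀ aε
  have hM0 : (0:ℝ) < M := by linarith
  have habsε : |ε| = ε := abs_of_pos hε
  have hp₄ : p₄ = M * (M - 1) * (M - 3) * ε ^ (M - 5) / 8 := rfl
  have hp₂ : p₂ = M * (M - 1) * (5 - M) * ε ^ (M - 3) / 4 := rfl
  have hp₀ : p₀ = M * (1 - (M - 1) * (7 - M) / 8) * ε ^ (M - 1) := rfl
  -- power bookkeeping
  have k4 : ε ^ (M - 5) * ε ^ (4:ℕ) = ε ^ (M - 1) := by
    rw [← Real.rpow_natCast ε 4, ← Real.rpow_add hε]; congr 1; push_cast; ring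
  have k3 : ε ^ (M - 5) * ε ^ (3:ℕ) = ε ^ (M - 2) := by
    rw [← Real.rpow_natCast ε 3, ← Real.rpow_add hε]; congr 1; push_cast; ring
  have k52 : ε ^ (M - 5) * ε ^ (2:ℕ) = ε ^ (M - 3) := by
    rw [← Real.rpow_natCast ε 2, ← Real.rpow_add hε]; congr 1; push_cast; ring
  have k32 : ε ^ (M - 3) * ε ^ (2:ℕ) = ε ^ (M - 1) := by
    rw [← Real.rpow_natCast ε 2, ← Real.rpow_add hε]; congr 1; push_cast; ring
  have k31 : ε ^ (M - 3) * ε = ε ^ (M - 2) := by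
    nth_rewrite 2 [← Real.rpow_one ε]
    rw [← Real.rpow_add hε]; congr 1; ring
  -- the matching identities
  have E0 : p₄ * ε ^ 4 + p₂ * ε ^ 2 + p₀ = M * ε ^ (M - 1) := by
    rw [hp₄, hp₂, hp₀]
    linear_combination (M * (M - 1) * (M - 3) / 8) * k4 + (M * (M - 1) * (5 - M) / 4) * k32
  have E1 : 4 * p₄ * ε ^ 3 + 2 * p₂ * ε = M * (M - 1) * ε ^ (M - 2) := by
    rw [hp₄, hp₂]
    linear_combination (M * (M - 1) * (M - 3) / 2) * k3 + (M * (M - 1) * (5 - M) / 2) * k31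
  have E2 : 12 * p₄ * ε ^ 2 + 2 * p₂ = M * (M - 1) * (M - 2) * ε ^ (M - 3) := by
    rw [hp₄, hp₂]
    linear_combination (3 * M * (M - 1) * (M - 3) / 2) * k52
  -- outer derivatives
  have hf₀ : ∀ v : ℝ, v ≠ 0 →
      HasDerivAt (fun w : ℝ => M * |w| ^ (M - 1)) (M * (M - 1) * |v| ^ (M - 3) * v) v := by
    intro v hv
    have h := (pm_habs (M - 1) hv).const_mul M
    convert h using 1
    · rfl
    · rfl
    rw [show M - 1 - 2 = M - 3 by ring]; ring
  have hf₁ : ∀ v : ℝ, v ≠ 0 →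
      HasDerivAt (fun w : ℝ => M * (M - 1) * |w| ^ (M - 3) * w)
        (M * (M - 1) * (M - 2) * |v| ^ (M - 3)) v := by
    intro v hv
    have h := ((pm_habs (M - 3) hv).const_mul (M * (M - 1))).mul (hasDerivAt_id v)
    simp only [id_eq] at h
    convert h using 1
    · rfl
    · rfl
    · rfl
    have hv2 : |v| ^ (M - 5) * v ^ 2 = |v| ^ (M - 3) := by
      rw [← sq_abs, ← Real.rpow_natCast |v| 2, ← Real.rpow_add (abs_pos.2 hv)]
      congr 1; push_cast; ring
    rw [show M - 3 - 2 = M - 5 by ring]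
    linear_combination (-(M * (M - 1) * (M - 3))) * hv2
  have hf₂c : ∀ v : ℝ, v ≠ 0 →
      ContinuousAt (fun w : ℝ => M * (M - 1) * (M - 2) * |w| ^ (M - 3)) v := by
    intro v hv
    have h1 : ContinuousAt (fun w : ℝ => |w| ^ (M - 3)) v :=
      ContinuousAt.comp (Real.continuousAt_rpow_const _ _ (Or.inl (abs_ne_zero.2 hv)))
        continuous_abs.continuousAt
    exact h1.const_mul _
  -- inner (polynomial) derivatives
  have hg₀ : ∀ v : ℝ, HasDerivAt (fun w : ℝ => p₄ * w ^ 4 + p₂ * w ^ 2 + p₀)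
      (4 * p₄ * v ^ 3 + 2 * p₂ * v) v := by
    intro v
    have h := (((hasDerivAt_pow 4 v).const_mul p₄).add
      ((hasDerivAt_pow 2 v).const_mul p₂)).add_const p₀
    convert h using 1
    · rfl
    · rfl
    · rfl
    push_cast; ring
  have hg₁ : ∀ v : ℝ, HasDerivAt (fun w : ℝ => 4 * p₄ * w ^ 3 + 2 * p₂ * w)
      (12 * p₄ * v ^ 2 + 2 * p₂) v := by
    intro v
    have h := ((hasDerivAt_pow 3 v).const_mul (4 * p₄)).add
      ((hasDerivAt_id v).const_mul (2 * p₂))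
    convert h using 1
    · rfl
    · rfl
    · rfl
    push_cast; ring
  have hg₂c : Continuous (fun w : ℝ => 12 * p₄ * w ^ 2 + 2 * p₂) :=
    (continuous_const.mul (continuous_pow 2)).add continuous_const
  -- first derivative of aε
  have hderiv1 : ∀ v : ℝ, HasDerivAt aε
      (if ε ≤ |v| then M * (M - 1) * |v| ^ (M - 3) * v else 4 * p₄ * v ^ 3 + 2 * p₂ * v) v := by
    intro v
    rcases lt_trichotomy |v| ε with h | h | h
    · rw [if_neg (not_le.2 h)]
      apply (hg₀ v).congr_of_eventuallyEq
      filter_upwards [(isOpen_lt continuous_abs continuous_const).mem_nhds h] with w hw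
      exact if_neg (not_le.2 hw)
    · rw [if_pos h.ge]
      rcases (abs_eq hε.le).1 h with h1 | h1
      · rw [h1, habsε]
        apply pm_glue hε (f := fun w : ℝ => M * |w| ^ (M - 1))
          (g := fun w : ℝ => p₄ * w ^ 4 + p₂ * w ^ 2 + p₀)
        · have h2 := hf₀ ε hε.ne'; rwa [habsε] at h2
        · have h2 := hg₀ ε
          convert h2 using 1
          linear_combination M * (M - 1) * k31 - E1
        · rw [habsε]; linear_combination -E0
        · intro w hw; exact if_pos hw
        · intro w hw; exact if_neg (not_le.2 hw)
      · rw [h1, abs_neg, habsε]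
        apply pm_glue_neg hε (f := fun w : ℝ => M * |w| ^ (M - 1))
          (g := fun w : ℝ => p₄ * w ^ 4 + p₂ * w ^ 2 + p₀)
        · have h2 := hf₀ (-ε) (by simpa using hε.ne')
          rwa [abs_neg, habsε] at h2
        · have h2 := hg₀ (-ε)
          convert h2 using 1
          linear_combination E1 - M * (M - 1) * k31
        · rw [abs_neg, habsε]; linear_combination -E0
        · intro w hw; exact if_pos hw
        · intro w hw; exact if_neg (not_le.2 hw)
    · rw [if_pos h.le]
      have hv0 : v ≠ 0 := fun h0 => by rw [h0, abs_zero] at h; linarith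
      apply (hf₀ v hv0).congr_of_eventuallyEq
      filter_upwards [(isOpen_lt continuous_const continuous_abs).mem_nhds h] with w hw
      exact if_pos hw.le
  -- second derivative of aε
  have hderiv2 : ∀ v : ℝ, HasDerivAt
      (fun v : ℝ => if ε ≤ |v| then M * (M - 1) * |v| ^ (M - 3) * v
        else 4 * p₄ * v ^ 3 + 2 * p₂ * v)
      (if ε ≤ |v| then M * (M - 1) * (M - 2) * |v| ^ (M - 3)
        else 12 * p₄ * v ^ 2 + 2 * p₂) v := by
    intro v
    rcases lt_trichotomy |v| ε with h | h | h
    · rw [if_neg (not_le.2 h)]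
      apply (hg₁ v).congr_of_eventuallyEq
      filter_upwards [(isOpen_lt continuous_abs continuous_const).mem_nhds h] with w hw
      exact if_neg (not_le.2 hw)
    · rw [if_pos h.ge]
      rcases (abs_eq hε.le).1 h with h1 | h1
      · rw [h1, habsε]
        apply pm_glue hε (f := fun w : ℝ => M * (M - 1) * |w| ^ (M - 3) * w)
          (g := fun w : ℝ => 4 * p₄ * w ^ 3 + 2 * p₂ * w)
        · have h2 := hf₁ ε hε.ne'; rwa [habsε] at h2
        · have h2 := hg₁ ε
          convert h2 using 1
          linear_combination -E2
        · rw [habsε]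
          linear_combination M * (M - 1) * k31 - E1
        · intro w hw; exact if_pos hw
        · intro w hw; exact if_neg (not_le.2 hw)
      · rw [h1, abs_neg, habsε]
        apply pm_glue_neg hε (f := fun w : ℝ => M * (M - 1) * |w| ^ (M - 3) * w)
          (g := fun w : ℝ => 4 * p₄ * w ^ 3 + 2 * p₂ * w)
        · have h2 := hf₁ (-ε) (by simpa using hε.ne')
          rwa [abs_neg, habsε] at h2
        · have h2 := hg₁ (-ε)
          convert h2 using 1
          linear_combination -E2
        · rw [abs_neg, habsε]
          linear_combination E1 - M * (M - 1) * k31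
        · intro w hw; exact if_pos hw
        · intro w hw; exact if_neg (not_le.2 hw)
    · rw [if_pos h.le]
      have hv0 : v ≠ 0 := fun h0 => by rw [h0, abs_zero] at h; linarith
      apply (hf₁ v hv0).congr_of_eventuallyEq
      filter_upwards [(isOpen_lt continuous_const continuous_abs).mem_nhds h] with w hw
      exact if_pos hw.le
  -- continuity of the second derivative
  have hcont2 : Continuous (fun v : ℝ => if ε ≤ |v| then M * (M - 1) * (M - 2) * |v| ^ (M - 3)
      else 12 * p₄ * v ^ 2 + 2 * p₂) := by
    rw [continuous_iff_continuousAt]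
    intro v
    rcases lt_trichotomy |v| ε with h | h | h
    · apply (hg₂c.continuousAt).congr
      filter_upwards [(isOpen_lt continuous_abs continuous_const).mem_nhds h] with w hw
      exact (if_neg (not_le.2 hw)).symm
    · rcases (abs_eq hε.le).1 h with h1 | h1
      · rw [h1]
        apply pm_gluec hε (f := fun w : ℝ => M * (M - 1) * (M - 2) * |w| ^ (M - 3))
          (g := fun w : ℝ => 12 * p₄ * w ^ 2 + 2 * p₂)
        · exact hf₂c ε hε.ne'
        · exact hg₂c.continuousAt
        · rw [habsε]; linear_combination -E2
        · intro w hw; exact if_pos hw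
        · intro w hw; exact if_neg (not_le.2 hw)
      · rw [h1]
        apply pm_gluec_neg hε (f := fun w : ℝ => M * (M - 1) * (M - 2) * |w| ^ (M - 3))
          (g := fun w : ℝ => 12 * p₄ * w ^ 2 + 2 * p₂)
        · exact hf₂c (-ε) (by simpa using hε.ne')
        · exact hg₂c.continuousAt
        · rw [abs_neg, habsε]; linear_combination -E2
        · intro w hw; exact if_pos hw
        · intro w hw; exact if_neg (not_le.2 hw)
    · have hv0 : v ≠ 0 := fun h0 => by rw [h0, abs_zero] at h; linarith
      apply (hf₂c v hv0).congr
      filter_upwards [(isOpen_lt continuous_const continuous_abs).mem_nhds h] with w hw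
      exact (if_pos hw.le).symm
  -- positivity of p₀
  have hεM1 : 0 < ε ^ (M - 1) := Real.rpow_pos_of_pos hε _
  have hp₀pos : 0 < p₀ := by
    rw [hp₀]
    have : 0 < 1 - (M - 1) * (7 - M) / 8 := by nlinarith
    positivity
  -- C² regularity
  have hC2 : ContDiff ℝ 2 aε := by
    rw [show (2 : WithTop ℕ∞) = 1 + 1 from rfl, contDiff_succ_iff_deriv]
    refine ⟨fun v => (hderiv1 v).differentiableAt, by simp, ?_⟩
    rw [funext fun v => (hderiv1 v).deriv, contDiff_one_iff_deriv]
    exact ⟨fun v => (hderiv2 v).differentiableAt,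
      by rw [funext fun v => (hderiv2 v).deriv]; exact hcont2⟩
  refine ⟨hC2, hp₀pos, ?_, ?_⟩
  -- lower bound by p₀
  · intro v
    show p₀ ≤ if ε ≤ |v| then M * |v| ^ (M - 1) else p₄ * v ^ 4 + p₂ * v ^ 2 + p₀
    by_cases h : ε ≤ |v|
    · rw [if_pos h]
      have h1 : ε ^ (M - 1) ≤ |v| ^ (M - 1) := Real.rpow_le_rpow hε.le h (by linarith)
      have h2 : 0 < M * ε ^ (M - 1) * ((M - 1) * (7 - M)) := by
        apply mul_pos (mul_pos hM0 hεM1)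
        apply mul_pos <;> linarith
      rw [hp₀]
      nlinarith [h1, h2]
    · rw [if_neg h]
      push_neg at h
      have hv2 : v ^ 2 ≤ ε ^ 2 := by
        have := abs_lt.1 h
        nlinarith [this.1, this.2]
      have hεM3 : 0 < ε ^ (M - 3) := Real.rpow_pos_of_pos hε _
      have hεM5 : 0 < ε ^ (M - 5) := Real.rpow_pos_of_pos hε _
      have hp4 : p₄ ≤ 0 := by
        rw [hp₄]
        have h5 : 0 < M * (M - 1) * ε ^ (M - 5) * (3 - M) :=
          mul_pos (mul_pos (mul_pos hM0 (by linarith)) hεM5) (by linarith)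
        nlinarith [h5]
      have hq : 0 ≤ p₄ * ε ^ 2 + p₂ := by
        have heq : p₄ * ε ^ 2 + p₂ = M * (M - 1) * (7 - M) / 8 * ε ^ (M - 3) := by
          rw [hp₄, hp₂]
          linear_combination (M * (M - 1) * (M - 3) / 8) * k52
        rw [heq]
        have : 0 < M * (M - 1) * (7 - M) / 8 := by
          have := mul_pos (mul_pos hM0 (show (0:ℝ) < M - 1 by linarith))
            (show (0:ℝ) < 7 - M by linarith)
          linarith
        positivity
      have h1 : p₄ * ε ^ 2 ≤ p₄ * v ^ 2 := by nlinarith [hv2, hp4]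
      have h2 : 0 ≤ p₄ * v ^ 2 + p₂ := by linarith
      have h3 : 0 ≤ v ^ 2 * (p₄ * v ^ 2 + p₂) := mul_nonneg (sq_nonneg v) h2
      nlinarith [h3]
  -- domination of a
  · -- the key pointwise inequality on (0, ε]
    have hF2d : ∀ w : ℝ, 0 < w → HasDerivAt
        (fun w : ℝ => 12 * p₄ * w ^ 2 + 2 * p₂ - M * (M - 1) * (M - 2) * w ^ (M - 3))
        (24 * p₄ * w - M * (M - 1) * (M - 2) * (M - 3) * w ^ (M - 4)) w := by
      intro w hw
      have h1 := ((hasDerivAt_pow 2 w).const_mul (12 * p₄)).add_const (2 * p₂)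
      have h2 := (Real.hasDerivAt_rpow_const (x := w) (p := M - 3)
        (Or.inl hw.ne')).const_mul (M * (M - 1) * (M - 2))
      have h := h1.sub h2
      convert h using 1
      · rfl
      · rfl
      · rfl
      rw [show M - 3 - 1 = M - 4 by ring]; push_cast; ring
    have hF1d : ∀ w : ℝ, 0 < w → HasDerivAt
        (fun w : ℝ => 4 * p₄ * w ^ 3 + 2 * p₂ * w - M * (M - 1) * w ^ (M - 2))
        (12 * p₄ * w ^ 2 + 2 * p₂ - M * (M - 1) * (M - 2) * w ^ (M - 3)) w := by
      intro w hw
      have h1 := ((hasDerivAt_pow 3 w).const_mul (4 * p₄)).add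
        ((hasDerivAt_id w).const_mul (2 * p₂))
      have h2 := (Real.hasDerivAt_rpow_const (x := w) (p := M - 2)
        (Or.inl hw.ne')).const_mul (M * (M - 1))
      have h := h1.sub h2
      convert h using 1
      · rfl
      · rfl
      · rfl
      rw [show M - 2 - 1 = M - 3 by ring]; push_cast; ring
    have hF0d : ∀ w : ℝ, 0 < w → HasDerivAt
        (fun w : ℝ => p₄ * w ^ 4 + p₂ * w ^ 2 + p₀ - M * w ^ (M - 1))
        (4 * p₄ * w ^ 3 + 2 * p₂ * w - M * (M - 1) * w ^ (M - 2)) w := by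
      intro w hw
      have h1 := (((hasDerivAt_pow 4 w).const_mul p₄).add
        ((hasDerivAt_pow 2 w).const_mul p₂)).add_const p₀
      have h2 := (Real.hasDerivAt_rpow_const (x := w) (p := M - 1)
        (Or.inl hw.ne')).const_mul M
      have h := h1.sub h2
      convert h using 1
      · rfl
      · rfl
      · rfl
      rw [show M - 1 - 1 = M - 2 by ring]; push_cast; ring
    have key : ∀ t : ℝ, 0 < t → t ≤ ε → M * t ^ (M - 1) ≤ p₄ * t ^ 4 + p₂ * t ^ 2 + p₀ := by
      intro t ht htε
      have hmem : ∀ w ∈ Set.Icc t ε, 0 < w := fun w hw => lt_of_lt_of_le ht hw.1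
      have hmemi : ∀ w ∈ interior (Set.Icc t ε), 0 < w := by
        rw [interior_Icc]; exact fun w hw => lt_trans ht hw.1
      have hεmem : ε ∈ Set.Icc t ε := ⟨htε, le_refl ε⟩
      -- F₂ is antitone, nonneg on [t, ε]
      have hF2anti : AntitoneOn
          (fun w : ℝ => 12 * p₄ * w ^ 2 + 2 * p₂ - M * (M - 1) * (M - 2) * w ^ (M - 3))
          (Set.Icc t ε) := by
        apply antitoneOn_of_deriv_nonpos (convex_Icc t ε)
        · exact fun w hw => ((hF2d w (hmem w hw)).differentiableAt.continuousAt).continuousWithinAt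
        · exact fun w hw => ((hF2d w (hmemi w hw)).differentiableAt).differentiableWithinAt
        · intro w hw
          rw [(hF2d w (hmemi w hw)).deriv]
          have hw0 : 0 < w := hmemi w hw
          have hwM4 : 0 < w ^ (M - 4) := Real.rpow_pos_of_pos hw0 _
          have hεM5 : 0 < ε ^ (M - 5) := Real.rpow_pos_of_pos hε _
          have hp4 : p₄ ≤ 0 := by
            rw [hp₄]
            have h5 : 0 < M * (M - 1) * ε ^ (M - 5) * (3 - M) :=
              mul_pos (mul_pos (mul_pos hM0 (by linarith)) hεM5) (by linarith)
            nlinarith [h5]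
          have h6 : 0 < M * (M - 1) * ((2 - M) * (3 - M)) * w ^ (M - 4) :=
            mul_pos (mul_pos (mul_pos hM0 (by linarith))
              (mul_pos (by linarith) (by linarith))) hwM4
          nlinarith [h6, mul_nonneg (neg_nonneg.2 hp4) hw0.le]
      have hF2ε : 12 * p₄ * ε ^ 2 + 2 * p₂ - M * (M - 1) * (M - 2) * ε ^ (M - 3) = 0 := by
        linear_combination E2
      have hF2nonneg : ∀ w ∈ Set.Icc t ε,
          0 ≤ 12 * p₄ * w ^ 2 + 2 * p₂ - M * (M - 1) * (M - 2) * w ^ (M - 3) := by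
        intro w hw
        have h := hF2anti hw hεmem hw.2
        simp only at h
        linarith
      have hF1mono : MonotoneOn
          (fun w : ℝ => 4 * p₄ * w ^ 3 + 2 * p₂ * w - M * (M - 1) * w ^ (M - 2))
          (Set.Icc t ε) := by
        apply monotoneOn_of_deriv_nonneg (convex_Icc t ε)
        · exact fun w hw => ((hF1d w (hmem w hw)).differentiableAt.continuousAt).continuousWithinAt
        · exact fun w hw => ((hF1d w (hmemi w hw)).differentiableAt).differentiableWithinAt
        · intro w hw
          rw [(hF1d w (hmemi w hw)).deriv]
          exact hF2nonneg w (interior_subset hw)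
      have hF1ε : 4 * p₄ * ε ^ 3 + 2 * p₂ * ε - M * (M - 1) * ε ^ (M - 2) = 0 := by
        linear_combination E1
      have hF1nonpos : ∀ w ∈ Set.Icc t ε,
          4 * p₄ * w ^ 3 + 2 * p₂ * w - M * (M - 1) * w ^ (M - 2) ≤ 0 := by
        intro w hw
        have h := hF1mono hw hεmem hw.2
        simp only at h
        linarith
      have hF0anti : AntitoneOn
          (fun w : ℝ => p₄ * w ^ 4 + p₂ * w ^ 2 + p₀ - M * w ^ (M - 1))
          (Set.Icc t ε) := by
        apply antitoneOn_of_deriv_nonpos (convex_Icc t ε)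
        · exact fun w hw => ((hF0d w (hmem w hw)).differentiableAt.continuousAt).continuousWithinAt
        · exact fun w hw => ((hF0d w (hmemi w hw)).differentiableAt).differentiableWithinAt
        · intro w hw
          rw [(hF0d w (hmemi w hw)).deriv]
          exact hF1nonpos w (interior_subset hw)
      have hF0ε : p₄ * ε ^ 4 + p₂ * ε ^ 2 + p₀ - M * ε ^ (M - 1) = 0 := by
        linear_combination E0
      have h := hF0anti (Set.mem_Icc.2 ⟨le_refl t, htε⟩) hεmem htε
      simp only at h
      linarith
    intro v
    show M * |v| ^ (M - 1) ≤
      if ε ≤ |v| then M * |v| ^ (M - 1) else p₄ * v ^ 4 + p₂ * v ^ 2 + p₀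
    by_cases h : ε ≤ |v|
    · rw [if_pos h]
    · rw [if_neg h]
      push_neg at h
      rcases eq_or_ne v 0 with rfl | hv0
      · rw [abs_zero, Real.zero_rpow (by intro h0; linarith [h0] : M - 1 ≠ 0)]
        norm_num
        nlinarith [hp₀pos]
      · have h0 : 0 < |v| := abs_pos.2 hv0
        have hk := key |v| h0 h.le
        have e2 : |v| ^ 2 = v ^ 2 := sq_abs v
        have e4 : |v| ^ 4 = v ^ 4 := by
          rw [show (4:ℕ) = 2 * 2 from rfl, pow_mul, pow_mul, sq_abs]
        rw [e2, e4] at hk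
        exact hk
end

section
/- For 1 < M < 2 and ε > 0, the regularized coefficient a_ε from the quartic matching construction satisfies |a_ε'(v)| ≤ |a'(v)| for all v ≠ 0, where a(v) = M|v|^{M−1} so a'(v) = M(M−1)sign(v)|v|^{M−2}. -/
set_option maxHeartbeats 1000000

private lemma keyIneq (M ε u : ℝ) (hM1 : 1 < M) (hM2 : M < 2) (hε : 0 < ε)
    (hu : 0 < u) (hue : u ≤ ε) :
    (M - 3) / 2 * ε ^ (M - 5) * u ^ (3:ℕ) + (5 - M) / 2 * ε ^ (M - 3) * u
      ≤ u ^ (M - 2) := by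
  set A := ε ^ (M - 5) with hA
  set B := ε ^ (M - 3) with hB
  have hA0 : 0 ≤ A := Real.rpow_nonneg hε.le _
  have hAB : A * ε ^ (2:ℕ) = B := by
    rw [hA, hB, ← Real.rpow_natCast ε 2, ← Real.rpow_add hε]; congr 1; ring
  set ψ : ℝ → ℝ := fun x => (M - 3) / 2 * A * x ^ (5 - M) + (5 - M) / 2 * B * x ^ (3 - M)
    with hψ
  have hder : ∀ x : ℝ, 0 < x → HasDerivAt ψ
      ((M - 3) / 2 * A * ((5 - M) * x ^ (4 - M))
        + (5 - M) / 2 * B * ((3 - M) * x ^ (2 - M))) x := by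
    intro x hx
    have h1 := (Real.hasDerivAt_rpow_const (x := x) (p := 5 - M)
      (Or.inl hx.ne')).const_mul ((M - 3) / 2 * A)
    have h2 := (Real.hasDerivAt_rpow_const (x := x) (p := 3 - M)
      (Or.inl hx.ne')).const_mul ((5 - M) / 2 * B)
    have e1 : 5 - M - 1 = 4 - M := by ring
    have e2 : 3 - M - 1 = 2 - M := by ring
    rw [e1] at h1; rw [e2] at h2
    exact h1.add h2
  have hmono : MonotoneOn ψ (Set.Icc u ε) := by
    apply monotoneOn_of_deriv_nonneg (convex_Icc u ε)
    · intro x hx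
      exact (hder x (lt_of_lt_of_le hu hx.1)).differentiableAt.continuousAt.continuousWithinAt
    · intro x hx
      rw [interior_Icc] at hx
      exact ((hder x (hu.trans hx.1)).differentiableAt).differentiableWithinAt
    · intro x hx
      rw [interior_Icc] at hx
      have hx0 : 0 < x := hu.trans hx.1
      rw [(hder x hx0).deriv]
      have hX : x ^ (4 - M) = x ^ (2 - M) * x ^ (2:ℕ) := by
        rw [← Real.rpow_natCast x 2, ← Real.rpow_add hx0]; congr 1; ring
      have hle : A * x ^ (2:ℕ) ≤ B := by
        rw [← hAB]
        exact mul_le_mul_of_nonneg_left (pow_le_pow_left₀ hx0.le hx.2.le 2) hA0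
      have hkey : (M - 3) / 2 * A * ((5 - M) * x ^ (4 - M))
          + (5 - M) / 2 * B * ((3 - M) * x ^ (2 - M))
          = (5 - M) * (3 - M) / 2 * (x ^ (2 - M) * (B - A * x ^ (2:ℕ))) := by
        rw [hX]; ring
      rw [hkey]
      apply mul_nonneg (by nlinarith)
      exact mul_nonneg (Real.rpow_nonneg hx0.le _) (by linarith)
  have hψε : ψ ε = 1 := by
    show (M - 3) / 2 * A * ε ^ (5 - M) + (5 - M) / 2 * B * ε ^ (3 - M) = 1
    have e1 : A * ε ^ (5 - M) = 1 := by
      rw [hA, ← Real.rpow_add hε, show M - 5 + (5 - M) = (0:ℝ) by ring, Real.rpow_zero]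
    have e2 : B * ε ^ (3 - M) = 1 := by
      rw [hB, ← Real.rpow_add hε, show M - 3 + (3 - M) = (0:ℝ) by ring, Real.rpow_zero]
    linear_combination (M - 3) / 2 * e1 + (5 - M) / 2 * e2
  have hψu : ψ u ≤ 1 := by
    rw [← hψε]
    exact hmono (Set.mem_Icc.mpr ⟨le_refl u, hue⟩) (Set.mem_Icc.mpr ⟨hue, le_refl ε⟩) hue
  have hu5 : u ^ (5 - M) = u ^ (3:ℕ) * u ^ (2 - M) := by
    rw [← Real.rpow_natCast u 3, ← Real.rpow_add hu]; congr 1; ring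
  have hu3 : u ^ (3 - M) = u * u ^ (2 - M) := by
    nth_rewrite 2 [← Real.rpow_one u]
    rw [← Real.rpow_add hu]; congr 1; ring
  have h2 : ((M - 3) / 2 * A * u ^ (3:ℕ) + (5 - M) / 2 * B * u) * u ^ (2 - M) ≤ 1 := by
    calc ((M - 3) / 2 * A * u ^ (3:ℕ) + (5 - M) / 2 * B * u) * u ^ (2 - M) = ψ u := by
          show _ = (M - 3) / 2 * A * u ^ (5 - M) + (5 - M) / 2 * B * u ^ (3 - M)
          rw [hu5, hu3]; ring
      _ ≤ 1 := hψu
  have hzero : (2 - M) + (M - 2) = 0 := by ring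
  calc (M - 3) / 2 * A * u ^ (3:ℕ) + (5 - M) / 2 * B * u
      = (((M - 3) / 2 * A * u ^ (3:ℕ) + (5 - M) / 2 * B * u) * u ^ (2 - M)) * u ^ (M - 2) := by
        rw [mul_assoc ((M - 3) / 2 * A * u ^ (3:ℕ) + (5 - M) / 2 * B * u),
          ← Real.rpow_add hu, hzero, Real.rpow_zero, mul_one]
    _ ≤ 1 * u ^ (M - 2) := mul_le_mul_of_nonneg_right h2 (Real.rpow_nonneg hu.le _)
    _ = u ^ (M - 2) := one_mul _

/-- for `1 < M < 2`, `ε > 0`, the regularized coefficient `a_ε` from the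
quartic matching construction satisfies `|a_ε'(v)| ≤ |a'(v)| = M(M−1)|v|^{M−2}` for all
`v ≠ 0`, where `a(v) = M|v|^{M−1}`. -/
theorem regularized_coefficient_derivative_bound (M ε : ℝ) (hM1 : 1 < M) (hM2 : M < 2)
    (hε : 0 < ε) :
    ∀ v : ℝ, v ≠ 0 →
      |deriv (fun w : ℝ => if ε ≤ |w| then M * |w| ^ (M - 1)
          else (M * (M - 1) * (M - 3) * ε ^ (M - 5) / 8) * w ^ 4
            + (M * (M - 1) * (5 - M) * ε ^ (M - 3) / 4) * w ^ 2
            + M * (1 - (M - 1) * (7 - M) / 8) * ε ^ (M - 1)) v|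
        ≤ M * (M - 1) * |v| ^ (M - 2) := by
  intro v hv
  set A := ε ^ (M - 5) with hA
  set B := ε ^ (M - 3) with hB
  set C := ε ^ (M - 2) with hC
  set E := ε ^ (M - 1) with hE
  set p4 := M * (M - 1) * (M - 3) * A / 8 with hp4
  set p2 := M * (M - 1) * (5 - M) * B / 4 with hp2
  set p0 := M * (1 - (M - 1) * (7 - M) / 8) * E with hp0
  set f : ℝ → ℝ := fun w => if ε ≤ |w| then M * |w| ^ (M - 1)
      else p4 * w ^ 4 + p2 * w ^ 2 + p0 with hf
  have hA0 : 0 ≤ A := Real.rpow_nonneg hε.le _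
  have hB0 : 0 ≤ B := Real.rpow_nonneg hε.le _
  have hC0 : 0 ≤ C := Real.rpow_nonneg hε.le _
  have hMM : 0 < M * (M - 1) := by nlinarith
  have hAB : A * ε ^ (2:ℕ) = B := by
    rw [hA, hB, ← Real.rpow_natCast ε 2, ← Real.rpow_add hε]; congr 1; ring
  have hAC : A * ε ^ (3:ℕ) = C := by
    rw [hA, hC, ← Real.rpow_natCast ε 3, ← Real.rpow_add hε]; congr 1; ring
  have hBC : B * ε = C := by
    rw [hB, hC]
    nth_rewrite 2 [← Real.rpow_one ε]
    rw [← Real.rpow_add hε]; congr 1; ring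
  have hAE : A * ε ^ (4:ℕ) = E := by
    rw [hA, hE, ← Real.rpow_natCast ε 4, ← Real.rpow_add hε]; congr 1; ring
  have hBE : B * ε ^ (2:ℕ) = E := by
    rw [hB, hE, ← Real.rpow_natCast ε 2, ← Real.rpow_add hε]; congr 1; ring
  have hqval : p4 * ε ^ 4 + p2 * ε ^ 2 + p0 = M * E := by
    rw [hp4, hp2, hp0]
    linear_combination (M * (M - 1) * (M - 3) / 8) * hAE + (M * (M - 1) * (5 - M) / 4) * hBE
  have hdq : p4 * (4 * ε ^ 3) + p2 * (2 * ε) = M * (M - 1) * C := by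
    rw [hp4, hp2]
    linear_combination (M * (M - 1) * (M - 3) / 2) * hAC + (M * (M - 1) * (5 - M) / 2) * hBC
  rcases lt_trichotomy (|v|) ε with h1 | h2 | h3
  · -- interior: quartic branch
    have hu : 0 < |v| := abs_pos.mpr hv
    have hev : f =ᶠ[nhds v] fun w => p4 * w ^ 4 + p2 * w ^ 2 + p0 := by
      filter_upwards [(isOpen_lt continuous_abs continuous_const).mem_nhds h1] with w hw
      simp only [hf]
      rw [if_neg (not_le.mpr hw)]
    rw [hev.deriv_eq]
    have hd0 := (((hasDerivAt_pow 4 v).const_mul p4).add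
      ((hasDerivAt_pow 2 v).const_mul p2)).add_const p0
    norm_num at hd0
    have hd : HasDerivAt (fun w : ℝ => p4 * w ^ 4 + p2 * w ^ 2 + p0)
        (p4 * (4 * v ^ 3) + p2 * (2 * v)) v := by
      convert hd0.add_const p0 using 1
      try ring
    rw [hd.deriv]
    have key := keyIneq M ε (|v|) hM1 hM2 hε hu h1.le
    have hp4le : p4 ≤ 0 := by
      rw [hp4]
      have : M * (M - 1) * (M - 3) ≤ 0 := by nlinarith
      nlinarith
    have hv2 : v ^ 2 ≤ ε ^ 2 := by
      have := sq_abs v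
      nlinarith [abs_nonneg v]
    have hsum : 4 * p4 * ε ^ 2 + 2 * p2 = M * (M - 1) * B := by
      rw [hp4, hp2]
      linear_combination (M * (M - 1) * (M - 3) / 2) * hAB
    have hnn : 0 ≤ 4 * p4 * v ^ 2 + 2 * p2 := by
      have hBnn : 0 ≤ M * (M - 1) * B := mul_nonneg hMM.le hB0
      nlinarith [mul_nonneg (neg_nonneg.mpr hp4le) (by linarith : (0:ℝ) ≤ ε ^ 2 - v ^ 2)]
    have habs : |p4 * (4 * v ^ 3) + p2 * (2 * v)| = |v| * (4 * p4 * v ^ 2 + 2 * p2) := by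
      have h : p4 * (4 * v ^ 3) + p2 * (2 * v) = v * (4 * p4 * v ^ 2 + 2 * p2) := by ring
      rw [h, abs_mul, abs_of_nonneg hnn]
    rw [habs]
    have hvv2 : v ^ 2 = |v| ^ 2 := (sq_abs v).symm
    calc |v| * (4 * p4 * v ^ 2 + 2 * p2)
        = M * (M - 1) * ((M - 3) / 2 * A * |v| ^ (3:ℕ) + (5 - M) / 2 * B * |v|) := by
          rw [hp4, hp2, hvv2]; ring
      _ ≤ M * (M - 1) * |v| ^ (M - 2) := by
          exact mul_le_mul_of_nonneg_left key hMM.le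
  · -- boundary
    rcases (abs_eq hε.le).mp h2 with hve | hve
    · -- v = ε
      rw [hve]
      have hgd : HasDerivAt (fun w : ℝ => M * w ^ (M - 1)) (M * ((M - 1) * ε ^ (M - 2))) ε := by
        have := (Real.hasDerivAt_rpow_const (x := ε) (p := M - 1) (Or.inl hε.ne')).const_mul M
        have e : M - 1 - 1 = M - 2 := by ring
        rwa [e] at this
      have hfval : f ε = M * E := by
        simp only [hf]
        rw [abs_of_pos hε, if_pos le_rfl, hE]
      have hright : HasDerivWithinAt f (M * ((M - 1) * C)) (Set.Ici ε) ε := by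
        apply (hgd.hasDerivWithinAt (s := Set.Ici ε)).congr_of_eventuallyEq
        · filter_upwards [self_mem_nhdsWithin] with w hw
          have hw0 : 0 < w := lt_of_lt_of_le hε hw
          simp only [hf]
          rw [abs_of_pos hw0, if_pos (Set.mem_Ici.mp hw)]
        · rw [hfval, hE]
      have hqd : HasDerivAt (fun w : ℝ => p4 * w ^ 4 + p2 * w ^ 2 + p0)
          (M * ((M - 1) * C)) ε := by
        have h := (((hasDerivAt_pow 4 ε).const_mul p4).add
          ((hasDerivAt_pow 2 ε).const_mul p2)).add_const p0
        norm_num at h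
        refine (h.add_const p0).congr_deriv (Eq.symm ?_)
        linear_combination (-(M * (M - 1) * (M - 3)) / 2) * hAC + (-(M * (M - 1) * (5 - M)) / 2) * hBC
      have hleft : HasDerivWithinAt f (M * ((M - 1) * C)) (Set.Iic ε) ε := by
        apply (hqd.hasDerivWithinAt (s := Set.Iic ε)).congr_of_eventuallyEq
        · have hmem : Set.Ioi (-ε) ∈ nhdsWithin ε (Set.Iic ε) :=
            nhdsWithin_le_nhds (Ioi_mem_nhds (by linarith))
          filter_upwards [self_mem_nhdsWithin, hmem] with w hw1 hw2
          rcases eq_or_lt_of_le (Set.mem_Iic.mp hw1) with rfl | hlt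
          · rw [hfval, ← hqval]
          · simp only [hf]
            rw [if_neg (not_le.mpr (abs_lt.mpr ⟨hw2, hlt⟩))]
        · rw [hfval, ← hqval]
      have hunion := hleft.union hright
      rw [Set.Iic_union_Ici] at hunion
      rw [(hasDerivWithinAt_univ.mp hunion).deriv]
      rw [abs_of_pos hε]
      rw [abs_of_nonneg (by nlinarith : (0:ℝ) ≤ M * ((M - 1) * C))]
      rw [hC]; ring_nf
      exact le_refl _
    · -- v = -ε
      rw [hve]
      have houter : HasDerivAt (fun y : ℝ => y ^ (M - 1)) ((M - 1) * ε ^ (M - 2))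
          ((fun w : ℝ => -w) (-ε)) := by
        simp only [neg_neg]
        have := Real.hasDerivAt_rpow_const (x := ε) (p := M - 1) (Or.inl hε.ne')
        have e : M - 1 - 1 = M - 2 := by ring
        rwa [e] at this
      have hcomp : HasDerivAt (fun w : ℝ => (-w) ^ (M - 1))
          ((M - 1) * ε ^ (M - 2) * (-1)) (-ε) :=
        HasDerivAt.comp (-ε) houter (hasDerivAt_neg (-ε))
      have hgd : HasDerivAt (fun w : ℝ => M * (-w) ^ (M - 1))
          (M * ((M - 1) * ε ^ (M - 2) * (-1))) (-ε) := hcomp.const_mul M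
      have hfval : f (-ε) = M * E := by
        simp only [hf]
        rw [abs_neg, abs_of_pos hε, if_pos le_rfl, hE]
      have hleft : HasDerivWithinAt f (M * ((M - 1) * C * (-1))) (Set.Iic (-ε)) (-ε) := by
        have hgd' : HasDerivAt (fun w : ℝ => M * (-w) ^ (M - 1))
            (M * ((M - 1) * C * (-1))) (-ε) := by rw [hC]; exact hgd
        apply (hgd'.hasDerivWithinAt (s := Set.Iic (-ε))).congr_of_eventuallyEq
        · filter_upwards [self_mem_nhdsWithin] with w hw
          have hw' : w ≤ -ε := hw
          have hw0 : w < 0 := lt_of_le_of_lt hw' (by linarith)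
          simp only [hf]
          rw [abs_of_neg hw0, if_pos (by linarith : ε ≤ -w)]
        · rw [hfval, hE, neg_neg]
      have hqd : HasDerivAt (fun w : ℝ => p4 * w ^ 4 + p2 * w ^ 2 + p0)
          (M * ((M - 1) * C * (-1))) (-ε) := by
        have h := (((hasDerivAt_pow 4 (-ε)).const_mul p4).add
          ((hasDerivAt_pow 2 (-ε)).const_mul p2)).add_const p0
        norm_num at h
        refine (h.add_const p0).congr_deriv (Eq.symm ?_)
        linear_combination (M * (M - 1) * (M - 3) / 2) * hAC
          + (M * (M - 1) * (5 - M) / 2) * hBC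
      have hright : HasDerivWithinAt f (M * ((M - 1) * C * (-1))) (Set.Ici (-ε)) (-ε) := by
        apply (hqd.hasDerivWithinAt (s := Set.Ici (-ε))).congr_of_eventuallyEq
        · have hmem : Set.Iio ε ∈ nhdsWithin (-ε) (Set.Ici (-ε)) :=
            nhdsWithin_le_nhds (Iio_mem_nhds (by linarith))
          filter_upwards [self_mem_nhdsWithin, hmem] with w hw1 hw2
          rcases eq_or_lt_of_le (Set.mem_Ici.mp hw1) with h | hlt
          · rw [← h, hfval, ← hqval]
            ring
          · simp only [hf]
            rw [if_neg (not_le.mpr (abs_lt.mpr ⟨hlt, hw2⟩))]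
        · rw [hfval, ← hqval]
          ring
      have hunion := hleft.union hright
      rw [Set.Iic_union_Ici] at hunion
      rw [(hasDerivWithinAt_univ.mp hunion).deriv]
      have hCpos : 0 ≤ M * (M - 1) * C := mul_nonneg hMM.le hC0
      have he : M * ((M - 1) * C * (-1)) = -(M * (M - 1) * C) := by ring
      rw [he, abs_neg, abs_of_nonneg hCpos, abs_neg, abs_of_pos hε, hC]
  · -- outer: power branch
    rcases hv.lt_or_gt with hvneg | hvpos
    · have hev : f =ᶠ[nhds v] fun w => M * (-w) ^ (M - 1) := by
        have hopen : IsOpen {w : ℝ | ε < |w| ∧ w < 0} :=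
          (isOpen_lt continuous_const continuous_abs).inter
            (isOpen_lt continuous_id continuous_const)
        filter_upwards [hopen.mem_nhds ⟨h3, hvneg⟩] with w hw
        simp only [hf]
        rw [if_pos hw.1.le, abs_of_neg hw.2]
      rw [hev.deriv_eq]
      have houter : HasDerivAt (fun y : ℝ => y ^ (M - 1)) ((M - 1) * (-v) ^ (M - 2))
          ((fun w : ℝ => -w) v) := by
        have := Real.hasDerivAt_rpow_const (x := -v) (p := M - 1)
          (Or.inl (neg_ne_zero.mpr hv))
        have e : M - 1 - 1 = M - 2 := by ring
        rwa [e] at this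
      have hgd : HasDerivAt (fun w : ℝ => M * (-w) ^ (M - 1))
          (M * ((M - 1) * (-v) ^ (M - 2) * (-1))) v :=
        (HasDerivAt.comp v houter (hasDerivAt_neg v)).const_mul M
      rw [hgd.deriv]
      have hnn : 0 ≤ M * (M - 1) * (-v) ^ (M - 2) :=
        mul_nonneg hMM.le (Real.rpow_nonneg (by linarith) _)
      have he : M * ((M - 1) * (-v) ^ (M - 2) * (-1)) = -(M * (M - 1) * (-v) ^ (M - 2)) := by
        ring
      rw [he, abs_neg, abs_of_nonneg hnn, abs_of_neg hvneg]
    · have hev : f =ᶠ[nhds v] fun w => M * w ^ (M - 1) := by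
        have hopen : IsOpen {w : ℝ | ε < |w| ∧ 0 < w} :=
          (isOpen_lt continuous_const continuous_abs).inter
            (isOpen_lt continuous_const continuous_id)
        filter_upwards [hopen.mem_nhds ⟨h3, hvpos⟩] with w hw
        simp only [hf]
        rw [if_pos hw.1.le, abs_of_pos hw.2]
      rw [hev.deriv_eq]
      have hgd : HasDerivAt (fun w : ℝ => M * w ^ (M - 1))
          (M * ((M - 1) * v ^ (M - 2))) v := by
        have := (Real.hasDerivAt_rpow_const (x := v) (p := M - 1) (Or.inl hv)).const_mul M
        have e : M - 1 - 1 = M - 2 := by ring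
        rwa [e] at this
      rw [hgd.deriv]
      have hnn : 0 ≤ M * ((M - 1) * v ^ (M - 2)) :=
        mul_nonneg (by linarith) (mul_nonneg (by linarith) (Real.rpow_nonneg hvpos.le _))
      rw [abs_of_nonneg hnn, abs_of_pos hvpos]
      exact le_of_eq (by ring)
end
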